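/- Let d ≥ 1 and n ≥ 1, let μ be a partition of n into at most d parts, and define the permutation-twirled state ρ̃_≠^μ := (1/n!) Σ_{π ∈ S_n} ψ(π) ρ_≠^μ ψ(π)^{−1}. Then the permutation test is insensitive to the input order: Tr[Π_{(n)} · ρ̃_≠^μ] = Tr[Π_{(n)} · ρ_≠^μ] = 1/binom(n,μ). -/

import Mathlib

open MeasureTheory Matrix
open scoped ComplexOrder

noncomputable section

/-- The unitary group `U(d)`. -/
abbrev UG (d : ℕ) := Matrix.unitaryGroup (Fin d) ℂ

noncomputable instance (d : ℕ) : MeasurableSpace (UG d) := borel _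

instance (d : ℕ) : BorelSpace (UG d) := ⟨rfl⟩

/-- The permutation matrix `ψ(π)` on `(ℂ^d)^{⊗n}`, with `(x,y)` entry `1` iff `y = x ∘ π`. -/
def psi (d n : ℕ) (π : Equiv.Perm (Fin n)) : Matrix (Fin n → Fin d) (Fin n → Fin d) ℂ :=
  Matrix.of fun x y => if y = x ∘ π then 1 else 0

/-- The symmetrizer `Π_{(n)} = (1/n!) ∑_{π ∈ S_n} ψ(π)`. -/
def symmetrizer (d n : ℕ) : Matrix (Fin n → Fin d) (Fin n → Fin d) ℂ :=
  ((n.factorial : ℂ))⁻¹ • ∑ π : Equiv.Perm (Fin n), psi d n π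

/-- The `n`-fold tensor power of a `d × d` matrix: `(U^{⊗n})_{x,y} = ∏ i, U_{x i, y i}`. -/
def tpow (d n : ℕ) (U : Matrix (Fin d) (Fin d) ℂ) :
    Matrix (Fin n → Fin d) (Fin n → Fin d) ℂ :=
  Matrix.of fun x y => ∏ i, U (x i) (y i)

/-- The list consisting of `μ 0` copies of `0`, then `μ 1` copies of `1`, etc. -/
def wordList (d : ℕ) (μ : Fin d → ℕ) : List (Fin d) :=
  (List.ofFn fun i => List.replicate (μ i) i).flatten

lemma wordList_length (d : ℕ) (μ : Fin d → ℕ) : (wordList d μ).length = ∑ i, μ i := by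
  simp [wordList, List.length_flatten, Function.comp, List.sum_ofFn]

/-- The word indexing the basis vector `|e_μ⟩`: the first `μ 0` tensor factors carry the
first basis label, the next `μ 1` factors the second basis label, etc. -/
def word (d n : ℕ) (μ : Fin d → ℕ) (hsum : ∑ i, μ i = n) (j : Fin n) : Fin d :=
  (wordList d μ).get ⟨j, by rw [wordList_length, hsum]; exact j.isLt⟩

/-- `∫ U^{⊗n} |e_w⟩⟨e_w| (U^{⊗n})^† dq` for a basis word `w` (entrywise Bochner integral). -/
def rhoWord (d n : ℕ) (w : Fin n → Fin d) (q : Measure (UG d)) :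
    Matrix (Fin n → Fin d) (Fin n → Fin d) ℂ :=
  Matrix.of fun x y =>
    ∫ U : UG d, tpow d n (U : Matrix (Fin d) (Fin d) ℂ) x w *
      star (tpow d n (U : Matrix (Fin d) (Fin d) ℂ) y w) ∂q

/-- The Haar-twirled unequal state `ρ_≠^μ`. -/
def rhoNE (d n : ℕ) (μ : Fin d → ℕ) (hsum : ∑ i, μ i = n) (haar : Measure (UG d)) :
    Matrix (Fin n → Fin d) (Fin n → Fin d) ℂ :=
  rhoWord d n (word d n μ hsum) haar

/-- The partition `(n, 0, …, 0)`. -/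
def muEq (d n : ℕ) (hd : 0 < d) : Fin d → ℕ := fun i => if i = ⟨0, hd⟩ then n else 0

lemma muEq_sum (d n : ℕ) (hd : 0 < d) : ∑ i, muEq d n hd i = n := by
  simp [muEq]

/-- The equal state `ρ_=^n = ρ_≠^{(n,0,…,0)}`. -/
def rhoEQ (d n : ℕ) (hd : 0 < d) (haar : Measure (UG d)) :
    Matrix (Fin n → Fin d) (Fin n → Fin d) ℂ :=
  rhoNE d n (muEq d n hd) (muEq_sum d n hd) haar

/-- The set of POVM elements: Hermitian `P` with `0 ⪯ P ⪯ I`. -/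
def POVMs (d n : ℕ) : Set (Matrix (Fin n → Fin d) (Fin n → Fin d) ℂ) :=
  {P | P.PosSemidef ∧ (1 - P).PosSemidef}

/-- The average success probability of the test `{P, I - P}` with prior `p` on the equal case. -/
def successProb (d n : ℕ) (hd : 0 < d) (μ : Fin d → ℕ) (hsum : ∑ i, μ i = n)
    (haar : Measure (UG d)) (p : ℝ) (P : Matrix (Fin n → Fin d) (Fin n → Fin d) ℂ) : ℝ :=
  p * (Matrix.trace (P * rhoEQ d n hd haar)).re +
    (1 - p) * (1 - (Matrix.trace (P * rhoNE d n μ hsum haar)).re)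

/-- The permutation-twirled unequal state `ρ̃_≠^μ = (1/n!) ∑_π ψ(π) ρ_≠^μ ψ(π)⁻¹`. -/
def rhoTwirl (d n : ℕ) (μ : Fin d → ℕ) (hsum : ∑ i, μ i = n) (haar : Measure (UG d)) :
    Matrix (Fin n → Fin d) (Fin n → Fin d) ℂ :=
  ((n.factorial : ℂ))⁻¹ •
    ∑ π : Equiv.Perm (Fin n), psi d n π * rhoNE d n μ hsum haar * psi d n π⁻¹

/- ============ auxiliary lemmas ============ -/

section Aux

lemma psi_mul (d n : ℕ) (π σ : Equiv.Perm (Fin n)) :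
    psi d n π * psi d n σ = psi d n (π * σ) := by
  ext x z
  rw [Matrix.mul_apply, Finset.sum_eq_single (x ∘ ⇑π)]
  · simp [psi, Function.comp_assoc]
    split_ifs <;> simp_all
  · intro y _ hy
    simp [psi, hy]
  · simp

lemma psi_one (d n : ℕ) : psi d n 1 = 1 := by
  ext x y
  simp [psi, Matrix.one_apply, eq_comm]

lemma psi_tpow_comm (d n : ℕ) (π : Equiv.Perm (Fin n)) (U : Matrix (Fin d) (Fin d) ℂ) :
    psi d n π * tpow d n U = tpow d n U * psi d n π := by
  ext x z
  rw [Matrix.mul_apply, Matrix.mul_apply, Finset.sum_eq_single (x ∘ ⇑π),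
    Finset.sum_eq_single (z ∘ ⇑π⁻¹)]
  · simp only [psi, tpow, Matrix.of_apply]
    have hz : z = (z ∘ ⇑π⁻¹) ∘ ⇑π := by funext i; simp
    rw [if_pos trivial, if_pos hz, one_mul, mul_one,
      ← Equiv.prod_comp π fun i => U (x i) ((z ∘ ⇑π⁻¹) i)]
    simp
  · intro y _ hy
    simp only [psi, tpow, Matrix.of_apply]
    rw [if_neg, mul_zero]
    intro h
    exact hy (by funext i; simpa using (congrFun h (π⁻¹ i)).symm)
  · simp
  · intro y _ hy
    simp [psi, hy]
  · simp

lemma tpow_mul (d n : ℕ) (U V : Matrix (Fin d) (Fin d) ℂ) :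
    tpow d n U * tpow d n V = tpow d n (U * V) := by
  ext x z
  simp only [tpow, Matrix.mul_apply, Matrix.of_apply]
  rw [Fintype.prod_sum fun i j => U (x i) j * V j (z i)]
  exact Finset.sum_congr rfl fun y _ => (Finset.prod_mul_distrib).symm

lemma tpow_one (d n : ℕ) : tpow d n 1 = 1 := by
  ext x y
  by_cases h : x = y
  · subst h; simp [tpow, Matrix.one_apply]
  · simp only [tpow, Matrix.of_apply, Matrix.one_apply, h, if_false]
    obtain ⟨i, hi⟩ := Function.ne_iff.mp h
    exact Finset.prod_eq_zero (Finset.mem_univ i) (by simp [Matrix.one_apply, hi])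

lemma tpow_conjTranspose (d n : ℕ) (U : Matrix (Fin d) (Fin d) ℂ) :
    (tpow d n U)ᴴ = tpow d n Uᴴ := by
  ext x y
  simp [tpow, Matrix.conjTranspose_apply]

lemma symmetrizer_mul_psi (d n : ℕ) (π : Equiv.Perm (Fin n)) :
    symmetrizer d n * psi d n π = symmetrizer d n := by
  unfold symmetrizer
  rw [smul_mul_assoc, Finset.sum_mul]
  congr 1
  simp_rw [psi_mul]
  exact Fintype.sum_equiv (Equiv.mulRight π) _ _ fun σ => rfl

lemma psi_mul_symmetrizer (d n : ℕ) (π : Equiv.Perm (Fin n)) :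
    psi d n π * symmetrizer d n = symmetrizer d n := by
  unfold symmetrizer
  rw [mul_smul_comm, Finset.mul_sum]
  congr 1
  simp_rw [psi_mul]
  exact Fintype.sum_equiv (Equiv.mulLeft π) _ _ fun σ => rfl

lemma symmetrizer_tpow_comm (d n : ℕ) (U : Matrix (Fin d) (Fin d) ℂ) :
    symmetrizer d n * tpow d n U = tpow d n U * symmetrizer d n := by
  unfold symmetrizer
  rw [smul_mul_assoc, mul_smul_comm, Finset.sum_mul, Finset.mul_sum]
  congr 1
  exact Finset.sum_congr rfl fun π _ => psi_tpow_comm d n π U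

lemma conj_symmetrizer (d n : ℕ) (U : UG d) :
    (tpow d n (U : Matrix (Fin d) (Fin d) ℂ))ᴴ * symmetrizer d n *
      tpow d n (U : Matrix (Fin d) (Fin d) ℂ) = symmetrizer d n := by
  rw [mul_assoc, symmetrizer_tpow_comm, ← mul_assoc, tpow_conjTranspose, tpow_mul,
    ← Matrix.star_eq_conjTranspose]
  rw [show star (U : Matrix (Fin d) (Fin d) ℂ) * (U : Matrix (Fin d) (Fin d) ℂ) = 1 from
    U.2.1]
  rw [tpow_one, one_mul]

/-- The stabilizer of a function under precomposition by permutations has cardinality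
the product of the factorials of the fiber cardinalities. -/
lemma card_stab {α β : Type*} [Fintype α] [DecidableEq α] [Fintype β] [DecidableEq β]
    (f : α → β) :
    Fintype.card {π : Equiv.Perm α // f = f ∘ ⇑π}
      = ∏ i, (Fintype.card {x // f x = i}).factorial := by
  have E : {π : Equiv.Perm α // f = f ∘ ⇑π} ≃ ∀ i, Equiv.Perm {x // f x = i} :=
    { toFun := fun π i => Equiv.Perm.subtypePerm π.1
        (fun x => by rw [show f (π.1 x) = f x from (congrFun π.2 x).symm])
      invFun := fun g => ⟨(Equiv.sigmaFiberEquiv f).symm.trans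
        ((Equiv.sigmaCongrRight g).trans (Equiv.sigmaFiberEquiv f)), by
          funext x
          exact (((g (f x)) ⟨x, rfl⟩).2).symm⟩
      left_inv := fun π => Subtype.ext (Equiv.ext fun x => rfl)
      right_inv := fun g => by
        funext i
        ext ⟨x, hx⟩
        subst hx
        rfl }
  rw [Fintype.card_congr E, Fintype.card_pi]
  exact Finset.prod_congr rfl fun i _ => Fintype.card_perm

lemma sum_ite_count {β : Type*} [DecidableEq β] (n : ℕ) (g : Fin n → β) (i : β) :
    (∑ j, if g j = i then 1 else 0 : ℕ) = (List.ofFn g).count i := by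
  induction n with
  | zero => simp
  | succ m ih =>
      rw [Fin.sum_univ_succ, List.ofFn_succ, List.count_cons, ih (fun j => g j.succ)]
      simp only [beq_iff_eq]
      exact Nat.add_comm _ _

lemma card_word_fiber (d n : ℕ) (μ : Fin d → ℕ) (hsum : ∑ i, μ i = n) (i : Fin d) :
    Fintype.card {j : Fin n // word d n μ hsum j = i} = μ i := by
  have h1 : List.ofFn (word d n μ hsum) = wordList d μ := by
    apply List.ext_getElem
    · rw [List.length_ofFn, wordList_length, hsum]
    · intro k h1 h2
      simp [List.getElem_ofFn, word]
  rw [Fintype.card_subtype, Finset.card_filter, sum_ite_count n (word d n μ hsum) i, h1]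
  rw [wordList]
  rw [List.count_flatten, List.map_ofFn, List.sum_ofFn]
  simp only [Function.comp_apply, List.count_replicate, beq_iff_eq]
  rw [Finset.sum_ite_eq']
  simp

lemma symmetrizer_diag (d n : ℕ) (μ : Fin d → ℕ) (hsum : ∑ i, μ i = n) :
    symmetrizer d n (word d n μ hsum) (word d n μ hsum)
      = ((Nat.multinomial Finset.univ μ : ℂ))⁻¹ := by
  set w := word d n μ hsum
  have h1 : symmetrizer d n w w
      = ((n.factorial : ℂ))⁻¹ * ((Fintype.card {π : Equiv.Perm (Fin n) // w = w ∘ ⇑π} : ℕ) : ℂ) := by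
    rw [symmetrizer, Matrix.smul_apply, Matrix.sum_apply, smul_eq_mul]
    congr 1
    rw [Fintype.card_subtype, Finset.card_filter]
    push_cast
    exact Finset.sum_congr rfl fun π _ => by simp [psi]
  rw [h1, card_stab]
  have hc : ∀ i, Fintype.card {x // w x = i} = μ i := fun i => by
    convert card_word_fiber d n μ hsum i
  simp_rw [hc]
  have hspec : (∏ i, (μ i).factorial) * Nat.multinomial Finset.univ μ = n.factorial := by
    rw [Nat.multinomial_spec, hsum]
  have hF : (n.factorial : ℂ) ≠ 0 := Nat.cast_ne_zero.2 (Nat.factorial_ne_zero n)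
  refine eq_inv_of_mul_eq_one_left ?_
  have key : (↑(∏ x : Fin d, (μ x).factorial) : ℂ) * ↑(Nat.multinomial Finset.univ μ)
      = (n.factorial : ℂ) := by exact_mod_cast congrArg Nat.cast hspec
  push_cast at key
  field_simp
  push_cast
  linear_combination key

end Aux

section Aux2

lemma entry_norm_le_one (d : ℕ) (U : UG d) (i j : Fin d) :
    ‖(U : Matrix (Fin d) (Fin d) ℂ) i j‖ ≤ 1 := by
  have h : (star (U : Matrix (Fin d) (Fin d) ℂ) * (U : Matrix (Fin d) (Fin d) ℂ)) j j = 1 := by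
    rw [U.2.1]; simp [Matrix.one_apply]
  rw [Matrix.star_eq_conjTranspose, Matrix.mul_apply] at h
  have h2 : ∑ k, Complex.normSq ((U : Matrix (Fin d) (Fin d) ℂ) k j) = 1 := by
    have := congrArg Complex.re h
    rw [Complex.re_sum] at this
    simpa [Matrix.conjTranspose_apply, Complex.normSq_apply, Complex.mul_re] using this
  have h3 : Complex.normSq ((U : Matrix (Fin d) (Fin d) ℂ) i j) ≤ 1 :=
    h2 ▸ Finset.single_le_sum
      (f := fun k => Complex.normSq ((U : Matrix (Fin d) (Fin d) ℂ) k j))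
      (fun k _ => Complex.normSq_nonneg _) (Finset.mem_univ i)
  have h4 := Complex.sq_norm ((U : Matrix (Fin d) (Fin d) ℂ) i j)
  have h5 : (0:ℝ) ≤ ‖(U : Matrix (Fin d) (Fin d) ℂ) i j‖ := norm_nonneg _
  nlinarith

lemma tpow_entry_norm_le_one (d n : ℕ) (U : UG d) (x y : Fin n → Fin d) :
    ‖tpow d n (U : Matrix (Fin d) (Fin d) ℂ) x y‖ ≤ 1 := by
  simp only [tpow, Matrix.of_apply]
  rw [norm_prod]
  exact Finset.prod_le_one (fun i _ => norm_nonneg _)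
    (fun i _ => entry_norm_le_one d U (x i) (y i))

lemma tpow_continuous (d n : ℕ) (x y : Fin n → Fin d) :
    Continuous fun U : UG d => tpow d n (U : Matrix (Fin d) (Fin d) ℂ) x y := by
  simp only [tpow, Matrix.of_apply]
  exact continuous_finset_prod _ fun i _ =>
    ((continuous_apply (y i)).comp ((continuous_apply (x i)).comp continuous_subtype_val))

lemma integrable_entry (d n : ℕ) (haar : Measure (UG d)) [IsProbabilityMeasure haar]
    (a b w : Fin n → Fin d) :
    Integrable (fun U : UG d => tpow d n (U : Matrix (Fin d) (Fin d) ℂ) a w *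
      star (tpow d n (U : Matrix (Fin d) (Fin d) ℂ) b w)) haar := by
  have hc : Continuous fun U : UG d => tpow d n (U : Matrix (Fin d) (Fin d) ℂ) a w *
      star (tpow d n (U : Matrix (Fin d) (Fin d) ℂ) b w) :=
    (tpow_continuous d n a w).mul (tpow_continuous d n b w).star
  refine (integrable_const (1:ℝ)).mono' hc.aestronglyMeasurable ?_
  filter_upwards with U
  rw [norm_mul, norm_star]
  have h1 := tpow_entry_norm_le_one d n U a w
  have h2 := tpow_entry_norm_le_one d n U b w
  nlinarith [norm_nonneg (tpow d n (U : Matrix (Fin d) (Fin d) ℂ) a w),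
    norm_nonneg (tpow d n (U : Matrix (Fin d) (Fin d) ℂ) b w)]

lemma trace_symm_rhoWord (d n : ℕ) (w : Fin n → Fin d) (haar : Measure (UG d))
    [IsProbabilityMeasure haar] :
    Matrix.trace (symmetrizer d n * rhoWord d n w haar) = symmetrizer d n w w := by
  have key : ∀ U : UG d,
      ∑ x, ∑ y, symmetrizer d n x y *
        (tpow d n (U : Matrix (Fin d) (Fin d) ℂ) y w *
          star (tpow d n (U : Matrix (Fin d) (Fin d) ℂ) x w)) = symmetrizer d n w w := by
    intro U
    have h2 : ((tpow d n (U : Matrix (Fin d) (Fin d) ℂ))ᴴ * symmetrizer d n *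
        tpow d n (U : Matrix (Fin d) (Fin d) ℂ)) w w
        = ∑ x, ∑ y, symmetrizer d n x y *
            (tpow d n (U : Matrix (Fin d) (Fin d) ℂ) y w *
              star (tpow d n (U : Matrix (Fin d) (Fin d) ℂ) x w)) := by
      rw [Matrix.mul_apply]
      simp only [Matrix.mul_apply, Matrix.conjTranspose_apply, Finset.sum_mul]
      rw [Finset.sum_comm]
      exact Finset.sum_congr rfl fun x _ => Finset.sum_congr rfl fun y _ => by ring
    rw [← h2, conj_symmetrizer]
  calc Matrix.trace (symmetrizer d n * rhoWord d n w haar)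
      = ∑ x, ∑ y, symmetrizer d n x y * ∫ U : UG d,
          (tpow d n (U : Matrix (Fin d) (Fin d) ℂ) y w *
            star (tpow d n (U : Matrix (Fin d) (Fin d) ℂ) x w)) ∂haar := by
        rw [Matrix.trace]
        simp only [Matrix.diag_apply, Matrix.mul_apply, rhoWord, Matrix.of_apply]
    _ = ∑ x, ∑ y, ∫ U : UG d, symmetrizer d n x y *
          (tpow d n (U : Matrix (Fin d) (Fin d) ℂ) y w *
            star (tpow d n (U : Matrix (Fin d) (Fin d) ℂ) x w)) ∂haar := by
        simp_rw [MeasureTheory.integral_const_mul]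
    _ = ∑ x, ∫ U : UG d, ∑ y, symmetrizer d n x y *
          (tpow d n (U : Matrix (Fin d) (Fin d) ℂ) y w *
            star (tpow d n (U : Matrix (Fin d) (Fin d) ℂ) x w)) ∂haar :=
        Finset.sum_congr rfl fun x _ => (MeasureTheory.integral_finset_sum _ fun y _ =>
          (integrable_entry d n haar y x w).const_mul _).symm
    _ = ∫ U : UG d, ∑ x, ∑ y, symmetrizer d n x y *
          (tpow d n (U : Matrix (Fin d) (Fin d) ℂ) y w *
            star (tpow d n (U : Matrix (Fin d) (Fin d) ℂ) x w)) ∂haar :=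
        (MeasureTheory.integral_finset_sum _ fun x _ =>
          integrable_finset_sum _ fun y _ => (integrable_entry d n haar y x w).const_mul _).symm
    _ = ∫ _U : UG d, symmetrizer d n w w ∂haar := by
        exact MeasureTheory.integral_congr_ae (Filter.Eventually.of_forall key)
    _ = symmetrizer d n w w := by simp

lemma trace_symm_twirl (d n : ℕ) (μ : Fin d → ℕ) (hsum : ∑ i, μ i = n) (hn : 1 ≤ n)
    (haar : Measure (UG d)) :
    Matrix.trace (symmetrizer d n * rhoTwirl d n μ hsum haar)
      = Matrix.trace (symmetrizer d n * rhoNE d n μ hsum haar) := by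
  have hF : ((n.factorial : ℂ)) ≠ 0 := Nat.cast_ne_zero.2 (Nat.factorial_ne_zero n)
  rw [rhoTwirl, Matrix.mul_smul, Matrix.trace_smul, Finset.mul_sum, Matrix.trace_sum]
  have hterm : ∀ π : Equiv.Perm (Fin n),
      Matrix.trace (symmetrizer d n * (psi d n π * rhoNE d n μ hsum haar * psi d n π⁻¹))
        = Matrix.trace (symmetrizer d n * rhoNE d n μ hsum haar) := by
    intro π
    rw [show symmetrizer d n * (psi d n π * rhoNE d n μ hsum haar * psi d n π⁻¹)
        = symmetrizer d n * psi d n π * rhoNE d n μ hsum haar * psi d n π⁻¹ by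
      rw [← mul_assoc, ← mul_assoc]]
    rw [Matrix.trace_mul_cycle, symmetrizer_mul_psi, psi_mul_symmetrizer]
  simp_rw [hterm]
  rw [Finset.sum_const, Finset.card_univ, Fintype.card_perm, Fintype.card_fin, smul_eq_mul,
    nsmul_eq_mul, ← mul_assoc, inv_mul_cancel₀ hF, one_mul]

end Aux2


/-- The permutation test is insensitive to the input order:
`Tr[Π_{(n)} ρ̃_≠^μ] = Tr[Π_{(n)} ρ_≠^μ] = 1/binom(n,μ)`. -/
theorem permutation_test_order_insensitive (d n : ℕ) (hd : 1 ≤ d) (hn : 1 ≤ n)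
    (μ : Fin d → ℕ) (hmono : ∀ i j : Fin d, i ≤ j → μ j ≤ μ i) (hsum : ∑ i, μ i = n)
    (haar : Measure (UG d)) [IsProbabilityMeasure haar]
    (hinv : ∀ V : UG d, Measure.map (fun U => V * U) haar = haar) :
    Matrix.trace (symmetrizer d n * rhoTwirl d n μ hsum haar)
        = Matrix.trace (symmetrizer d n * rhoNE d n μ hsum haar) ∧
    Matrix.trace (symmetrizer d n * rhoNE d n μ hsum haar)
        = ((Nat.multinomial Finset.univ μ : ℂ))⁻¹ := by
  refine ⟨trace_symm_twirl d n μ hsum hn haar, ?_⟩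
  rw [rhoNE, trace_symm_rhoWord, symmetrizer_diag]

end
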